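/- Let Γ be a group generated by a finite symmetric set S = S⁻¹ ⊆ Γ whose growth function satisfies γ_S(n−1) ≥ C·n^d for every integer n ≥ 1, where C > 0 and d ≥ 1 are real constants. Then for every finite nonempty subset D ⊆ Γ, |∂_S D| / |D| ≥ ( C^{1/d}·d / (d+1)^{1+1/d} ) · |D|^{−1/d}. -/

import Mathlib

open scoped Pointwise

variable {G : Type*} [Group G] [DecidableEq G]

/-- The ball of radius `r` in the word metric: elements of `G` expressible as
a product of at most `r` elements of `S`. -/
def wordBall (S : Finset G) : ℕ → Finset G
  | 0 => {1}
  | r + 1 => wordBall S r ∪ S * wordBall S r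

/-- The inner boundary of a finite set `D` with respect to the generating set `S`. -/
def innerBoundary (S D : Finset G) : Finset G :=
  D.filter fun x => ∃ s ∈ S, s * x ∉ D

lemma card_sdiff_smul_le (S D : Finset G) (hsymm : ∀ s ∈ S, s⁻¹ ∈ S)
    {s : G} (hs : s ∈ S) : (D \ s • D).card ≤ (innerBoundary S D).card := by
  apply Finset.card_le_card
  intro x hx
  rw [Finset.mem_sdiff] at hx
  obtain ⟨hxD, hx2⟩ := hx
  rw [innerBoundary, Finset.mem_filter]
  refine ⟨hxD, s⁻¹, hsymm s hs, fun h => hx2 ?_⟩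
  exact Finset.mem_smul_finset.mpr ⟨s⁻¹ * x, h, by simp⟩

lemma card_sdiff_smul_ball_le (S D : Finset G) (hsymm : ∀ s ∈ S, s⁻¹ ∈ S) :
    ∀ r : ℕ, ∀ g ∈ wordBall S r,
      (D \ g • D).card ≤ r * (innerBoundary S D).card := by
  intro r
  induction r with
  | zero =>
    intro g hg
    simp only [wordBall, Finset.mem_singleton] at hg
    subst hg
    simp
  | succ r ih =>
    intro g hg
    rw [wordBall, Finset.mem_union] at hg
    rcases hg with hg | hg
    · exact (ih g hg).trans (by nlinarith)
    · rw [Finset.mem_mul] at hg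
      obtain ⟨s, hs, h, hh, rfl⟩ := hg
      have hsub : D \ (s * h) • D ⊆ (D \ s • D) ∪ s • (D \ h • D) := by
        intro x hx
        rw [Finset.mem_sdiff] at hx
        obtain ⟨hxD, hx2⟩ := hx
        rw [Finset.mem_union]
        by_cases hxs : x ∈ s • D
        · right
          obtain ⟨y, hy, rfl⟩ := Finset.mem_smul_finset.mp hxs
          refine Finset.mem_smul_finset.mpr ⟨y, ?_, rfl⟩
          rw [Finset.mem_sdiff]
          refine ⟨hy, fun hyh => hx2 ?_⟩
          rw [← smul_smul]
          exact Finset.smul_mem_smul_finset hyh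
        · exact Or.inl (Finset.mem_sdiff.mpr ⟨hxD, hxs⟩)
      calc (D \ (s * h) • D).card ≤ ((D \ s • D) ∪ s • (D \ h • D)).card :=
            Finset.card_le_card hsub
        _ ≤ (D \ s • D).card + (s • (D \ h • D)).card := Finset.card_union_le _ _
        _ = (D \ s • D).card + (D \ h • D).card := by rw [Finset.card_smul_finset]
        _ ≤ (innerBoundary S D).card + r * (innerBoundary S D).card :=
            Nat.add_le_add (card_sdiff_smul_le S D hsymm hs) (ih h hh)
        _ = (r + 1) * (innerBoundary S D).card := by ring

lemma sum_card_inter_le (B D : Finset G) :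
    ∑ g ∈ B, (D ∩ g • D).card ≤ D.card * D.card := by
  have key : ∀ x ∈ D, (B.filter fun g => x ∈ g • D).card ≤ D.card := by
    intro x _
    apply Finset.card_le_card_of_injOn (fun g => g⁻¹ * x)
    · intro g hg
      rw [Finset.mem_coe, Finset.mem_filter] at hg
      obtain ⟨y, hy, hyx⟩ := Finset.mem_smul_finset.mp hg.2
      have : g⁻¹ * x = y := by rw [← hyx]; simp [smul_eq_mul]
      show g⁻¹ * x ∈ (D : Set G)
      rwa [this]
    · intro g₁ _ g₂ _ h
      have : g₁⁻¹ * x = g₂⁻¹ * x := h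
      have h2 : g₁⁻¹ = g₂⁻¹ := mul_right_cancel this
      simpa using h2
  calc ∑ g ∈ B, (D ∩ g • D).card
      = ∑ g ∈ B, ∑ x ∈ D, if x ∈ g • D then 1 else 0 := by
        refine Finset.sum_congr rfl fun g _ => ?_
        rw [← Finset.filter_mem_eq_inter, Finset.card_filter]
    _ = ∑ x ∈ D, ∑ g ∈ B, if x ∈ g • D then 1 else 0 := Finset.sum_comm
    _ ≤ ∑ x ∈ D, D.card := by
        refine Finset.sum_le_sum fun x hx => ?_
        rw [← Finset.card_filter]
        exact key x hx
    _ = D.card * D.card := by rw [Finset.sum_const, smul_eq_mul]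

lemma main_count (S D : Finset G) (hsymm : ∀ s ∈ S, s⁻¹ ∈ S) (r : ℕ) :
    (wordBall S r).card * D.card ≤
      D.card * D.card + (wordBall S r).card * (r * (innerBoundary S D).card) := by
  have h1 : ∀ g ∈ wordBall S r,
      D.card ≤ (D ∩ g • D).card + r * (innerBoundary S D).card := by
    intro g hg
    have := card_sdiff_smul_ball_le S D hsymm r g hg
    have h2 := Finset.card_inter_add_card_sdiff D (g • D)
    omega
  calc (wordBall S r).card * D.card = ∑ _g ∈ wordBall S r, D.card := by
        rw [Finset.sum_const, smul_eq_mul]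
    _ ≤ ∑ g ∈ wordBall S r, ((D ∩ g • D).card + r * (innerBoundary S D).card) :=
        Finset.sum_le_sum h1
    _ = (∑ g ∈ wordBall S r, (D ∩ g • D).card)
          + (wordBall S r).card * (r * (innerBoundary S D).card) := by
        rw [Finset.sum_add_distrib, Finset.sum_const, smul_eq_mul]
    _ ≤ D.card * D.card + (wordBall S r).card * (r * (innerBoundary S D).card) :=
        Nat.add_le_add_right (sum_card_inter_le _ _) _

lemma alg_aux (C d m : ℝ) (hC : 0 < C) (hm : 0 < m) (hd0 : 0 < d) :
    C ^ (1 / d) * d / (d + 1) ^ (1 + 1 / d) * m ^ (-(1 / d)) =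
      d / ((d + 1) * ((d + 1) * m / C) ^ (1 / d)) := by
  have hd1 : (0 : ℝ) < d + 1 := by linarith
  rw [Real.div_rpow (le_of_lt (mul_pos hd1 hm)) (le_of_lt hC),
    Real.mul_rpow (le_of_lt hd1) (le_of_lt hm),
    Real.rpow_add hd1, Real.rpow_one, Real.rpow_neg (le_of_lt hm)]
  have h1 : (0:ℝ) < C ^ (1/d) := Real.rpow_pos_of_pos hC _
  have h2 : (0:ℝ) < (d+1) ^ (1/d) := Real.rpow_pos_of_pos hd1 _
  have h3 : (0:ℝ) < m ^ (1/d) := Real.rpow_pos_of_pos hm _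
  field_simp

theorem stmt8 (S : Finset G)
    (hsymm : ∀ s ∈ S, s⁻¹ ∈ S) (hgen : Subgroup.closure (S : Set G) = ⊤)
    (C d : ℝ) (hC : 0 < C) (hd : 1 ≤ d)
    (hgrowth : ∀ n : ℕ, 1 ≤ n → C * (n : ℝ) ^ d ≤ ((wordBall S (n - 1)).card : ℝ))
    (D : Finset G) (hD : D.Nonempty) :
    C ^ (1 / d) * d / (d + 1) ^ (1 + 1 / d) * (D.card : ℝ) ^ (-(1 / d)) ≤
      ((innerBoundary S D).card : ℝ) / (D.card : ℝ) := by
  have hd0 : (0 : ℝ) < d := lt_of_lt_of_le one_pos hd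
  have hdne : d ≠ 0 := ne_of_gt hd0
  set m : ℝ := (D.card : ℝ) with hm
  set b : ℝ := ((innerBoundary S D).card : ℝ) with hb
  have hm1 : (1 : ℝ) ≤ m := by
    have h1 : 1 ≤ D.card := Finset.card_pos.mpr hD
    rw [hm]; exact_mod_cast h1
  have hm0 : (0 : ℝ) < m := lt_of_lt_of_le one_pos hm1
  have hb0 : (0 : ℝ) ≤ b := Nat.cast_nonneg _
  -- C ≤ 1
  have hC1 : C ≤ 1 := by
    have := hgrowth 1 le_rfl
    simpa [wordBall] using this
  have hd1pos : (0 : ℝ) < d + 1 := by linarith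
  set t : ℝ := ((d + 1) * m / C) ^ (1 / d) with ht
  have harg : (1 : ℝ) < (d + 1) * m / C := by
    rw [lt_div_iff₀ hC]
    nlinarith
  have hargpos : (0 : ℝ) < (d + 1) * m / C := lt_trans one_pos harg
  have ht1 : (1 : ℝ) < t := by
    rw [ht]
    exact (Real.one_lt_rpow_iff_of_pos hargpos).mpr (Or.inl ⟨harg, by positivity⟩)
  have ht0 : (0 : ℝ) < t := lt_trans one_pos ht1
  -- t ^ d = (d+1) * m / C
  have htd : t ^ d = (d + 1) * m / C := by
    rw [ht, ← Real.rpow_mul (le_of_lt hargpos), one_div_mul_cancel hdne, Real.rpow_one]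
  set r : ℕ := ⌈t⌉₊ - 1 with hr
  have hr1 : r + 1 = ⌈t⌉₊ := by
    have : 1 ≤ ⌈t⌉₊ := Nat.one_le_ceil_iff.mpr ht0
    omega
  have hrle : (r : ℝ) ≤ t := by
    have h1 : (⌈t⌉₊ : ℝ) < t + 1 := Nat.ceil_lt_add_one (le_of_lt ht0)
    have h2 : ((r : ℕ) : ℝ) = (⌈t⌉₊ : ℝ) - 1 := by
      rw [hr]
      have : 1 ≤ ⌈t⌉₊ := Nat.one_le_ceil_iff.mpr ht0
      push_cast [this]
      ring
    linarith
  have hrge : t ≤ ((r : ℝ) + 1) := by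
    have := Nat.le_ceil t
    rw [← hr1] at this
    exact_mod_cast this
  -- growth bound
  set Bc : ℝ := ((wordBall S r).card : ℝ) with hBc
  have hBc2 : (d + 1) * m ≤ Bc := by
    have hg := hgrowth (r + 1) (by omega)
    have hcast : (((r : ℕ) + 1 : ℕ) : ℝ) = (r : ℝ) + 1 := by push_cast; ring
    rw [Nat.add_sub_cancel] at hg
    have hmono : t ^ d ≤ ((r : ℝ) + 1) ^ d :=
      Real.rpow_le_rpow (le_of_lt ht0) hrge (le_of_lt hd0)
    have : C * t ^ d ≤ C * ((r : ℝ) + 1) ^ d :=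
      mul_le_mul_of_nonneg_left hmono (le_of_lt hC)
    rw [htd, mul_div_cancel₀ _ (ne_of_gt hC)] at this
    calc (d + 1) * m ≤ C * ((r : ℝ) + 1) ^ d := this
      _ ≤ Bc := by rw [hBc]; rw [hcast] at hg; exact hg
  -- combinatorial bound, cast to ℝ
  have hmain : Bc * m ≤ m * m + Bc * ((r : ℝ) * b) := by
    have := main_count S D hsymm r
    rw [hBc, hm, hb]
    exact_mod_cast this
  -- deduce m * d / (d+1) ≤ r * b
  have hkey : m * d / (d + 1) ≤ (r : ℝ) * b := by
    by_contra hcon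
    push_neg at hcon
    have hrbm : (r : ℝ) * b ≤ m := by
      have : m * d / (d + 1) ≤ m := by
        rw [div_le_iff₀ hd1pos]; nlinarith
      linarith
    have hcon' : (r : ℝ) * b * (d + 1) < m * d := (lt_div_iff₀ hd1pos).mp hcon
    nlinarith [mul_nonneg (sub_nonneg.mpr hBc2) (sub_nonneg.mpr hrbm), hm0, hmain,
      mul_pos hm0 hd1pos]
  have hkey2 : m * d / (d + 1) ≤ t * b :=
    hkey.trans (mul_le_mul_of_nonneg_right hrle hb0)
  -- final algebra
  have hfin : d / ((d + 1) * t) ≤ b / m := by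
    rw [div_le_div_iff₀ (mul_pos hd1pos ht0) hm0]
    calc d * m = (m * d / (d + 1)) * (d + 1) := by field_simp
      _ ≤ (t * b) * (d + 1) := by nlinarith
      _ = b * ((d + 1) * t) := by ring
  have heq : C ^ (1 / d) * d / (d + 1) ^ (1 + 1 / d) * m ^ (-(1 / d)) =
      d / ((d + 1) * t) := by
    rw [ht]; exact alg_aux C d m hC hm0 hd0
  rw [heq]
  exact hfin
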